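/- Let Z₁,…,Zₙ be independent random variables with Zᵢ ∈ [0, bᵢ] almost surely, bᵢ ∈ (0,1], and μᵢ = E[Zᵢ]. Then for every t ≥ 0, Pr(∑ᵢ Zᵢ ≥ t) ≤ exp(∑ᵢ μᵢ(1 + (e−2)bᵢ)) · e^{−t}. -/

import Mathlib

open MeasureTheory ProbabilityTheory

lemma exp_quad_aux {x : ℝ} (h0 : 0 ≤ x) (h1 : x ≤ 1) :
    Real.exp x ≤ 1 + x + (Real.exp 1 - 2) * x ^ 2 := by
  have hsum : ∀ y : ℝ, Real.exp y = ∑' k : ℕ, y ^ k / k.factorial := fun y => by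
    rw [Real.exp_eq_exp_ℝ, NormedSpace.exp_eq_tsum_div]
  have hs : ∀ y : ℝ, Summable (fun k : ℕ => y ^ k / k.factorial) :=
    fun y => Real.summable_pow_div_factorial y
  have hsplit : ∀ y : ℝ, Real.exp y = 1 + y + ∑' k : ℕ, y ^ (k + 2) / (k + 2).factorial := by
    intro y
    rw [hsum y, Summable.tsum_eq_zero_add (hs y), Summable.tsum_eq_zero_add ((summable_nat_add_iff 1).2 (hs y))]
    have : (fun k : ℕ => y ^ (k + 1 + 1) / (k + 1 + 1).factorial)
        = fun k : ℕ => y ^ (k + 2) / (k + 2).factorial := by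
      funext k; norm_num [show k + 1 + 1 = k + 2 from rfl]
    rw [this]
    norm_num [Nat.factorial]
    ring
  have hone : (∑' k : ℕ, (1:ℝ) ^ (k + 2) / (k + 2).factorial) = Real.exp 1 - 2 := by
    have h := hsplit 1
    simp only [one_pow] at h ⊢
    linarith
  rw [hsplit x]
  have hle : (∑' k : ℕ, x ^ (k + 2) / (k + 2).factorial) ≤
      ∑' k : ℕ, x ^ 2 * ((1:ℝ) ^ (k + 2) / (k + 2).factorial) := by
    refine Summable.tsum_le_tsum (fun k => ?_) ((summable_nat_add_iff 2).2 (hs x))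
      (((summable_nat_add_iff 2).2 (hs 1)).mul_left _)
    rw [one_pow, mul_one_div, div_le_div_iff_of_pos_right (by positivity)]
    calc x ^ (k + 2) = x ^ k * x ^ 2 := by ring
    _ ≤ 1 * x ^ 2 := by gcongr; exact pow_le_one₀ h0 h1
    _ = x ^ 2 := one_mul _
  calc 1 + x + ∑' k : ℕ, x ^ (k + 2) / (k + 2).factorial
      ≤ 1 + x + ∑' k : ℕ, x ^ 2 * ((1:ℝ) ^ (k + 2) / (k + 2).factorial) := by linarith
    _ = 1 + x + (Real.exp 1 - 2) * x ^ 2 := by rw [tsum_mul_left, hone]; ring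

lemma exp_le_linear_aux {x b : ℝ} (hx0 : 0 ≤ x) (hxb : x ≤ b) (hb1 : b ≤ 1) :
    Real.exp x ≤ 1 + x * (1 + (Real.exp 1 - 2) * b) := by
  have he : (0:ℝ) ≤ Real.exp 1 - 2 := by
    have := Real.add_one_le_exp 1
    linarith
  have h1 : Real.exp x ≤ 1 + x + (Real.exp 1 - 2) * x ^ 2 :=
    exp_quad_aux hx0 (hxb.trans hb1)
  have h2 : (Real.exp 1 - 2) * x ^ 2 ≤ (Real.exp 1 - 2) * (x * b) := by
    apply mul_le_mul_of_nonneg_left _ he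
    calc x ^ 2 = x * x := sq x
    _ ≤ x * b := by apply mul_le_mul_of_nonneg_left hxb hx0
  nlinarith

theorem stmt_5 {Ω : Type*} [MeasurableSpace Ω] (μ : Measure Ω) [IsProbabilityMeasure μ]
    (n : ℕ) (Z : Fin n → Ω → ℝ) (b : Fin n → ℝ)
    (hb0 : ∀ i, 0 < b i) (hb1 : ∀ i, b i ≤ 1)
    (hmeas : ∀ i, Measurable (Z i))
    (hindep : iIndepFun Z μ)
    (hbound : ∀ i, ∀ᵐ ω ∂μ, Z i ω ∈ Set.Icc 0 (b i))
    (m : Fin n → ℝ) (hm : ∀ i, m i = ∫ ω, Z i ω ∂μ)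
    (t : ℝ) (ht : 0 ≤ t) :
    (μ {ω | t ≤ ∑ i, Z i ω}).toReal ≤
      Real.exp (∑ i, m i * (1 + (Real.exp 1 - 2) * b i)) * Real.exp (-t) := by
  set c : Fin n → ℝ := fun i => 1 + (Real.exp 1 - 2) * b i with hc
  -- integrability of exp (1 * Z i)
  have hint : ∀ i, Integrable (fun ω => Real.exp (1 * Z i ω)) μ := by
    intro i
    refine (integrable_const (Real.exp (b i))).mono'
      (((hmeas i).const_mul 1).exp.aestronglyMeasurable) ?_
    filter_upwards [hbound i] with ω hω
    rw [Real.norm_eq_abs, abs_of_pos (Real.exp_pos _), one_mul, Real.exp_le_exp]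
    exact hω.2
  have hZint : ∀ i, Integrable (Z i) μ := by
    intro i
    refine (integrable_const (b i)).mono' (hmeas i).aestronglyMeasurable ?_
    filter_upwards [hbound i] with ω hω
    rw [Real.norm_eq_abs, abs_of_nonneg hω.1]
    exact hω.2
  -- Markov / Chernoff step
  have hintsum : Integrable (fun ω => Real.exp (1 * (∑ i, Z i) ω)) μ := by
    have := hindep.integrable_exp_mul_sum hmeas (s := Finset.univ)
      (t := 1) (fun i _ => hint i)
    simpa using this
  have markov := measure_ge_le_exp_mul_mgf (μ := μ) (X := ∑ i, Z i) (t := 1)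
    t zero_le_one hintsum
  have hset : {ω | t ≤ ∑ i, Z i ω} = {ω | t ≤ (∑ i, Z i) ω} := by
    ext ω; simp [Finset.sum_apply]
  -- bound on each mgf
  have hmgf : ∀ i, mgf (Z i) μ 1 ≤ Real.exp (m i * c i) := by
    intro i
    have hint2 : Integrable (fun ω => 1 + Z i ω * c i) μ :=
      (integrable_const 1).add ((hZint i).mul_const (c i))
    have step1 : mgf (Z i) μ 1 ≤ ∫ ω, (1 + Z i ω * c i) ∂μ := by
      refine integral_mono_ae (by simpa using hint i) hint2 ?_
      filter_upwards [hbound i] with ω hω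
      simpa [one_mul] using exp_le_linear_aux hω.1 hω.2 (hb1 i)
    have step2 : ∫ ω, (1 + Z i ω * c i) ∂μ = 1 + m i * c i := by
      rw [integral_add (integrable_const 1) ((hZint i).mul_const (c i)),
        integral_const, integral_mul_const, hm i]
      simp
    calc mgf (Z i) μ 1 ≤ 1 + m i * c i := step1.trans_eq step2
      _ = m i * c i + 1 := by ring
      _ ≤ Real.exp (m i * c i) := Real.add_one_le_exp _
  have hprod : mgf (∑ i, Z i) μ 1 ≤ Real.exp (∑ i, m i * c i) := by
    rw [hindep.mgf_sum hmeas Finset.univ, Real.exp_sum]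
    exact Finset.prod_le_prod (fun i _ => mgf_nonneg) (fun i _ => hmgf i)
  calc (μ {ω | t ≤ ∑ i, Z i ω}).toReal
      ≤ Real.exp (-1 * t) * mgf (∑ i, Z i) μ 1 := by rw [hset]; exact markov
    _ ≤ Real.exp (-t) * Real.exp (∑ i, m i * c i) := by
        rw [neg_one_mul]
        exact mul_le_mul_of_nonneg_left hprod (Real.exp_pos _).le
    _ = Real.exp (∑ i, m i * (1 + (Real.exp 1 - 2) * b i)) * Real.exp (-t) := by
        rw [mul_comm]
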